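/- Under the ATT(γ) marginals, for every i ∈ I and t one has E[SF_{i,t}] = β_{i,t}, and for every f ∈ F and t one has E[χ_{f,t}] = γ · x_{f,t} · p_{f,t}. Consequently, for any profits w_{f,t} ≥ 0, the expected total profit satisfies E[∑_{t=1}^T ∑_{f∈F} w_{f,t} χ_{f,t}] = γ · ∑_{t=1}^T ∑_{f∈F} w_{f,t} x_{f,t} p_{f,t}; in particular, ATT(γ) with γ ∈ [0,1/2] attains a γ fraction of the LP objective value, and hence a competitive ratio of at least γ for MP-KHD (Theorem: competitive analysis of ATT(γ)). -/

import Mathlib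

open MeasureTheory ProbabilityTheory Finset

private lemma aux_int01 {Ω : Type*} [MeasureSpace Ω] [IsProbabilityMeasure (ℙ : Measure Ω)]
    {h : Ω → ℝ} (h01 : ∀ ω, h ω = 0 ∨ h ω = 1) (hm : Measurable h) :
    Integrable h ℙ ∧ ∫ ω, h ω = (ℙ {ω | h ω = 1}).toReal := by
  have hms : MeasurableSet {ω | h ω = 1} := hm (measurableSet_singleton 1)
  have hrep : h = Set.indicator {ω | h ω = 1} (fun _ => (1:ℝ)) := by
    funext ω
    rcases h01 ω with h0 | h1
    · simp [Set.indicator, h0]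
    · simp [Set.indicator, h1]
  constructor
  · rw [hrep]; exact (integrable_const 1).indicator hms
  · have heq : (∫ ω, h ω) = ∫ ω, Set.indicator {ω | h ω = 1} (fun _ => (1:ℝ)) ω := by
      exact integral_congr_ae (Filter.EventuallyEq.of_eq (by rw [← hrep]))
    rw [heq, integral_indicator_const (1:ℝ) hms, smul_eq_mul, mul_one, measureReal_def]

@[to_additive]
private lemma aux_fin_prod {M : Type*} [CommMonoid M] {T : ℕ} (t : Fin T) (f : Fin T → M)
    (g : ℕ → M) (h : ∀ (n : ℕ) (hn : n < T), g n = f ⟨n, hn⟩) :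
    ∏ s ∈ Finset.Iio t, f s = ∏ n ∈ Finset.range t.val, g n := by
  refine Finset.prod_nbij' (fun s => (s : ℕ))
    (fun n => if hn : n < T then ⟨n, hn⟩ else t) ?_ ?_ ?_ ?_ ?_
  · intro a ha; simpa [Finset.mem_range] using Finset.mem_Iio.mp ha
  · intro n hn
    have hnt : n < t.val := Finset.mem_range.mp hn
    have hnT : n < T := hnt.trans t.isLt
    simp [hnT, Finset.mem_Iio, Fin.lt_def, hnt]
  · intro a _; simp [a.isLt]
  · intro n hn
    have hnT : n < T := (Finset.mem_range.mp hn).trans t.isLt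
    simp [hnT]
  · intro a _; rw [h a.val a.isLt]

private lemma aux_telescope (γ : ℝ) (d : ℕ → ℝ)
    (hg : ∀ n, 1 - γ * ∑ s ∈ Finset.range n, d s ≠ 0) :
    ∀ m, ∏ n ∈ Finset.range m,
        (1 - γ * d n / (1 - γ * ∑ s ∈ Finset.range n, d s))
      = 1 - γ * ∑ s ∈ Finset.range m, d s := by
  intro m
  induction m with
  | zero => simp
  | succ m ih =>
    rw [Finset.prod_range_succ, ih, Finset.sum_range_succ]
    have h2 := hg m
    field_simp
    ring

/-- The event that no assignment of agent `i` succeeds in a given round. -/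
private def Aset {Ω F I : Type*} (ι : F → I) (Wt : F → Ω → ℝ) (i : I) : Set Ω :=
  {ω | ∀ f, ι f = i → Wt f ω = 0}

open scoped Classical in
/-- competitive analysis of `ATT(γ)`: in the round-process model
(the round families `(W t f)_f` are mutually independent across `t`, and a.s.
at most one `W t f` is `1` per round), with safety indicators
`SF i t = 1` iff no `f` with `ι f = i` succeeded before round `t`, success
indicators `χ f t = W t f · SF (ι f) t`, and `ATT(γ)` marginals
`P(W t f = 1) = γ x f t p f t / β (ι f) t` where
`β i t = 1 - γ ∑_{s<t} ∑_{f:ι f=i} x f s p f s`, one has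
`E[SF i t] = β i t` and `E[χ f t] = γ · x f t · p f t` for all `i, f, t`.
Consequently, for any nonnegative profits `w`, the expected total profit equals
`γ · ∑_{t,f} w f t x f t p f t`; in particular `ATT(γ)` with `γ ∈ [0,1/2]`
attains a `γ` fraction of the LP objective value, hence a competitive ratio of
at least `γ` for MP-KHD. -/
theorem stmt_3 {Ω : Type*} [MeasureSpace Ω] [IsProbabilityMeasure (ℙ : Measure Ω)]
    {F I : Type*} [Fintype F] [Fintype I] [DecidableEq I]
    (ι : F → I) (T : ℕ)
    (W : Fin T → F → Ω → ℝ)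
    (hW01 : ∀ t f ω, W t f ω = 0 ∨ W t f ω = 1)
    (hWmeas : ∀ t f, Measurable (W t f))
    (hindep : iIndepFun
      (fun t ω => fun f => W t f ω) ℙ)
    (honce : ∀ᵐ ω ∂ℙ, ∀ t, ∑ f, W t f ω ≤ 1)
    (γ : ℝ) (hγ : γ ∈ Set.Icc (0 : ℝ) (1 / 2))
    (x p : F → Fin T → ℝ)
    (hx : ∀ f t, x f t ∈ Set.Icc (0 : ℝ) 1) (hp : ∀ f t, p f t ∈ Set.Icc (0 : ℝ) 1)
    (hcap : ∀ i, ∑ t, ∑ f ∈ univ.filter (fun f => ι f = i), x f t * p f t ≤ 1)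
    (β : I → Fin T → ℝ)
    (hβ : ∀ i t, β i t =
      1 - γ * ∑ s ∈ Finset.Iio t, ∑ f ∈ univ.filter (fun f => ι f = i), x f s * p f s)
    (hmarg : ∀ t f, ℙ {ω | W t f ω = 1} =
      ENNReal.ofReal (γ * x f t * p f t / β (ι f) t))
    (SF : I → Fin T → Ω → ℝ)
    (hSF : ∀ i t ω, SF i t ω =
      if ∀ s < t, ∀ f, ι f = i → W s f ω = 0 then 1 else 0)
    (χ : F → Fin T → Ω → ℝ)
    (hχ : ∀ f t ω, χ f t ω = W t f ω * SF (ι f) t ω) :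
    (∀ i t, (∫ ω, SF i t ω) = β i t) ∧
    (∀ f t, (∫ ω, χ f t ω) = γ * x f t * p f t) ∧
    (∀ w : F → Fin T → ℝ, (∀ f t, 0 ≤ w f t) →
      (∫ ω, ∑ t, ∑ f, w f t * χ f t ω) =
        γ * ∑ t, ∑ f, w f t * x f t * p f t) := by
  obtain ⟨hγ0, hγh⟩ := hγ
  have hc0 : ∀ f t, 0 ≤ x f t * p f t := fun f t =>
    mul_nonneg (hx f t).1 (hp f t).1
  -- the per-round LP mass, reindexed over ℕ
  set D : I → ℕ → ℝ := fun i n =>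
    if hn : n < T then ∑ f ∈ univ.filter (fun f => ι f = i), x f ⟨n, hn⟩ * p f ⟨n, hn⟩
    else 0 with hDdef
  have hD0 : ∀ i n, 0 ≤ D i n := by
    intro i n
    by_cases hn : n < T
    · simp only [hDdef, dif_pos hn]
      exact Finset.sum_nonneg fun f _ => hc0 f _
    · simp [hDdef, dif_neg hn]
  have hDfin : ∀ i (s : Fin T), D i s.val
      = ∑ f ∈ univ.filter (fun f => ι f = i), x f s * p f s := by
    intro i s
    simp only [hDdef, dif_pos s.isLt, Fin.eta]
  have hDsum : ∀ i n, ∑ s ∈ Finset.range n, D i s ≤ 1 := by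
    intro i n
    have h1 : ∑ s ∈ Finset.range n, D i s ≤ ∑ s ∈ Finset.range (n + T), D i s :=
      Finset.sum_le_sum_of_subset_of_nonneg
        (Finset.range_subset_range.mpr (Nat.le_add_right n T)) (fun s _ _ => hD0 i s)
    have h2 : ∑ s ∈ Finset.range (n + T), D i s = ∑ s ∈ Finset.range T, D i s := by
      refine (Finset.sum_subset (Finset.range_subset_range.mpr (Nat.le_add_left T n)) ?_).symm
      intro s _ hs
      simp only [Finset.mem_range, not_lt] at hs
      simp [hDdef, Nat.not_lt.mpr hs]
    have h3 : ∑ s ∈ Finset.range T, D i s = ∑ s : Fin T, D i s.val :=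
      (Fin.sum_univ_eq_sum_range (fun n => D i n) T).symm
    have h4 : ∑ s : Fin T, D i s.val
        = ∑ s : Fin T, ∑ f ∈ univ.filter (fun f => ι f = i), x f s * p f s :=
      Finset.sum_congr rfl fun s _ => hDfin i s
    calc ∑ s ∈ Finset.range n, D i s
        ≤ ∑ s ∈ Finset.range (n + T), D i s := h1
      _ = ∑ s : Fin T, ∑ f ∈ univ.filter (fun f => ι f = i), x f s * p f s := by
          rw [h2, h3, h4]
      _ ≤ 1 := hcap i
  have hghalf : ∀ i n, 1 / 2 ≤ 1 - γ * ∑ s ∈ Finset.range n, D i s := by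
    intro i n
    have h0 : 0 ≤ ∑ s ∈ Finset.range n, D i s :=
      Finset.sum_nonneg fun s _ => hD0 i s
    have h1 : γ * ∑ s ∈ Finset.range n, D i s ≤ γ * 1 :=
      mul_le_mul_of_nonneg_left (hDsum i n) hγ0
    nlinarith
  have hgne : ∀ i n, (1 - γ * ∑ s ∈ Finset.range n, D i s) ≠ 0 := fun i n =>
    ne_of_gt (lt_of_lt_of_le (by norm_num) (hghalf i n))
  have hgβ : ∀ i (t : Fin T), β i t = 1 - γ * ∑ n ∈ Finset.range t.val, D i n := by
    intro i t
    rw [hβ i t]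
    congr 2
    exact aux_fin_sum t _ (D i) (fun n hn => by simp only [hDdef, dif_pos hn])
  have hβhalf : ∀ i t, 1 / 2 ≤ β i t := fun i t => (hgβ i t) ▸ hghalf i t.val
  have hβne : ∀ i t, β i t ≠ 0 := fun i t =>
    ne_of_gt (lt_of_lt_of_le (by norm_num) (hβhalf i t))
  have hqnn : ∀ t f, 0 ≤ γ * x f t * p f t / β (ι f) t := fun t f =>
    div_nonneg (mul_nonneg (mul_nonneg hγ0 (hx f t).1) (hp f t).1)
      (le_trans (by norm_num) (hβhalf (ι f) t))
  have hEW : ∀ t f, Integrable (W t f) ℙ ∧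
      ∫ ω, W t f ω = γ * x f t * p f t / β (ι f) t := by
    intro t f
    obtain ⟨hint, hval⟩ := aux_int01 (hW01 t f) (hWmeas t f)
    exact ⟨hint, by rw [hval, hmarg t f, ENNReal.toReal_ofReal (hqnn t f)]⟩
  -- comap measurability of the round events
  have hAc : ∀ (i : I) (s : Fin T),
      MeasurableSet[MeasurableSpace.comap (fun ω => fun f => W s f ω)
        (inferInstance : MeasurableSpace (F → ℝ))] (Aset ι (W s) i) := by
    intro i s
    refine ⟨{v : F → ℝ | ∀ f, ι f = i → v f = 0}, ?_, rfl⟩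
    have he : {v : F → ℝ | ∀ f, ι f = i → v f = 0}
        = ⋂ f : F, {v : F → ℝ | ι f = i → v f = 0} := by
      ext v; simp [Set.mem_iInter, Set.mem_setOf_eq]
    rw [he]
    refine MeasurableSet.iInter fun f => ?_
    by_cases hf : ι f = i
    · have he2 : {v : F → ℝ | ι f = i → v f = 0} = (fun v : F → ℝ => v f) ⁻¹' {0} := by
        ext v; simp [hf]
      rw [he2]
      exact (measurable_pi_apply f) (measurableSet_singleton 0)
    · have he2 : {v : F → ℝ | ι f = i → v f = 0} = Set.univ := by
        ext v; simp [hf]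
      rw [he2]; exact MeasurableSet.univ
  have hEfc : ∀ (t : Fin T) (f : F),
      MeasurableSet[MeasurableSpace.comap (fun ω => fun f => W t f ω)
        (inferInstance : MeasurableSpace (F → ℝ))] {ω | W t f ω = 1} :=
    fun t f => ⟨(fun v : F → ℝ => v f) ⁻¹' {1},
      (measurable_pi_apply f) (measurableSet_singleton 1), rfl⟩
  have hWvec : ∀ s : Fin T, Measurable (fun ω => fun f => W s f ω) :=
    fun s => measurable_pi_lambda _ (fun f => hWmeas s f)
  have hAm : ∀ i s, MeasurableSet (Aset ι (W s) i) := by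
    intro i s
    obtain ⟨S, hS, hpre⟩ := hAc i s
    rw [← hpre]; exact hWvec s hS
  -- value of the per-round event
  have hAval : ∀ (i : I) (s : Fin T), (ℙ (Aset ι (W s) i)).toReal
      = 1 - γ * D i s.val / (1 - γ * ∑ r ∈ Finset.range s.val, D i r) := by
    intro i s
    have hae : (fun ω => Set.indicator (Aset ι (W s) i) (fun _ => (1:ℝ)) ω)
        =ᵐ[ℙ] fun ω => 1 - ∑ f ∈ univ.filter (fun f => ι f = i), W s f ω := by
      filter_upwards [honce] with ω hω
      have hsum := hω s
      by_cases hall : ∀ f, ι f = i → W s f ω = 0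
      · have hmem : ω ∈ Aset ι (W s) i := hall
        have hz : ∑ f ∈ univ.filter (fun f => ι f = i), W s f ω = 0 :=
          Finset.sum_eq_zero fun f hf => hall f (Finset.mem_filter.mp hf).2
        simp [Set.indicator_of_mem hmem, hz]
      · have hnmem : ω ∉ Aset ι (W s) i := hall
        push_neg at hall
        obtain ⟨f0, hf0i, hf0⟩ := hall
        have hf01 : W s f0 ω = 1 := (hW01 s f0 ω).resolve_left hf0
        have hWnn : ∀ f, 0 ≤ W s f ω := fun f => by
          rcases hW01 s f ω with h | h <;> rw [h] <;> norm_num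
        have hge : (1:ℝ) ≤ ∑ f ∈ univ.filter (fun f => ι f = i), W s f ω := by
          rw [← hf01]
          exact Finset.single_le_sum (fun f _ => hWnn f)
            (Finset.mem_filter.mpr ⟨Finset.mem_univ f0, hf0i⟩)
        have hle : ∑ f ∈ univ.filter (fun f => ι f = i), W s f ω ≤ 1 :=
          le_trans (Finset.sum_le_sum_of_subset_of_nonneg (Finset.filter_subset _ _)
            (fun f _ _ => hWnn f)) hsum
        have h1 : ∑ f ∈ univ.filter (fun f => ι f = i), W s f ω = 1 :=
          le_antisymm hle hge
        simp [Set.indicator_of_notMem hnmem, h1]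
    have h1 : (ℙ (Aset ι (W s) i)).toReal
        = ∫ ω, Set.indicator (Aset ι (W s) i) (fun _ => (1:ℝ)) ω := by
      rw [integral_indicator_const (1:ℝ) (hAm i s), smul_eq_mul, mul_one, measureReal_def]
    rw [h1, integral_congr_ae hae, integral_sub (integrable_const 1)
        (integrable_finset_sum _ (fun f _ => (hEW s f).1)),
      integral_const, integral_finset_sum _ (fun f _ => (hEW s f).1)]
    simp only [measureReal_def, measure_univ, ENNReal.toReal_one, smul_eq_mul, mul_one]
    congr 1
    have h2 : ∑ f ∈ univ.filter (fun f => ι f = i), ∫ ω, W s f ω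
        = ∑ f ∈ univ.filter (fun f => ι f = i), γ * (x f s * p f s) / β i s := by
      refine Finset.sum_congr rfl fun f hf => ?_
      rw [(hEW s f).2, (Finset.mem_filter.mp hf).2, mul_assoc]
    rw [h2, ← Finset.sum_div, ← Finset.mul_sum, ← hDfin i s, hgβ i s]
  -- the safety event and its probability
  have hCset : ∀ (i : I) (t : Fin T), ℙ (⋂ s ∈ Finset.Iio t, Aset ι (W s) i)
      = ∏ s ∈ Finset.Iio t, ℙ (Aset ι (W s) i) :=
    fun i t => hindep.meas_biInter (fun s _ => hAc i s)
  have hCprod : ∀ (i : I) (t : Fin T),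
      (∏ s ∈ Finset.Iio t, ℙ (Aset ι (W s) i)).toReal = β i t := by
    intro i t
    rw [ENNReal.toReal_prod]
    have h1 : ∏ s ∈ Finset.Iio t, (ℙ (Aset ι (W s) i)).toReal
        = ∏ n ∈ Finset.range t.val,
            (1 - γ * D i n / (1 - γ * ∑ r ∈ Finset.range n, D i r)) :=
      aux_fin_prod t _ _ (fun n hn => (hAval i ⟨n, hn⟩).symm)
    rw [h1, aux_telescope γ (D i) (fun n => hgne i n) t.val, ← hgβ i t]
  have hCm : ∀ (i : I) (t : Fin T),
      MeasurableSet (⋂ s ∈ Finset.Iio t, Aset ι (W s) i) :=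
    fun i t => Finset.measurableSet_biInter _ fun s _ => hAm i s
  -- part 1 : E[SF i t] = β i t
  have part1 : ∀ i t, (∫ ω, SF i t ω) = β i t := by
    intro i t
    have hrep : SF i t
        = Set.indicator (⋂ s ∈ Finset.Iio t, Aset ι (W s) i) (fun _ => (1:ℝ)) := by
      funext ω
      rw [hSF]
      by_cases hcnd : ∀ s < t, ∀ f, ι f = i → W s f ω = 0
      · rw [if_pos hcnd, Set.indicator_of_mem]
        exact Set.mem_iInter₂.mpr fun s hs f hf => hcnd s (Finset.mem_Iio.mp hs) f hf
      · rw [if_neg hcnd, Set.indicator_of_notMem]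
        intro hmem
        exact hcnd fun s hs f hf =>
          Set.mem_iInter₂.mp hmem s (Finset.mem_Iio.mpr hs) f hf
    have heq : (∫ ω, SF i t ω)
        = ∫ ω, Set.indicator (⋂ s ∈ Finset.Iio t, Aset ι (W s) i) (fun _ => (1:ℝ)) ω := by
      rw [← hrep]
    rw [heq, integral_indicator_const (1:ℝ) (hCm i t), smul_eq_mul, mul_one, measureReal_def,
      hCset i t, hCprod i t]
  -- part 2 : E[χ f t] = γ x p
  have part2 : ∀ f t, (∫ ω, χ f t ω) = γ * x f t * p f t ∧ Integrable (χ f t) ℙ := by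
    intro f t
    have hmE : MeasurableSet {ω | W t f ω = 1} := hWmeas t f (measurableSet_singleton 1)
    have hrep : χ f t = Set.indicator
        ({ω | W t f ω = 1} ∩ ⋂ s ∈ Finset.Iio t, Aset ι (W s) (ι f)) (fun _ => (1:ℝ)) := by
      funext ω
      rw [hχ, hSF]
      by_cases hWc : W t f ω = 1
      · by_cases hcnd : ∀ s < t, ∀ f', ι f' = ι f → W s f' ω = 0
        · rw [if_pos hcnd, hWc, one_mul, Set.indicator_of_mem]
          exact ⟨hWc, Set.mem_iInter₂.mpr fun s hs f' hf' =>
            hcnd s (Finset.mem_Iio.mp hs) f' hf'⟩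
        · rw [if_neg hcnd, mul_zero, Set.indicator_of_notMem]
          rintro ⟨-, hmem⟩
          exact hcnd fun s hs f' hf' =>
            Set.mem_iInter₂.mp hmem s (Finset.mem_Iio.mpr hs) f' hf'
      · have hW0 : W t f ω = 0 := (hW01 t f ω).resolve_right hWc
        rw [hW0, zero_mul, Set.indicator_of_notMem]
        rintro ⟨h1, -⟩
        exact hWc h1
    have hint : Integrable (χ f t) ℙ := by
      rw [hrep]; exact (integrable_const 1).indicator (hmE.inter (hCm (ι f) t))
    have hprod : ℙ ({ω | W t f ω = 1} ∩ ⋂ s ∈ Finset.Iio t, Aset ι (W s) (ι f))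
        = ℙ {ω | W t f ω = 1} * ∏ s ∈ Finset.Iio t, ℙ (Aset ι (W s) (ι f)) := by
      have hnot : t ∉ Finset.Iio t := by simp
      have h := hindep.meas_biInter (S := insert t (Finset.Iio t))
        (s := fun s => if s = t then {ω | W t f ω = 1} else Aset ι (W s) (ι f))
        (fun s _ => by
          by_cases h' : s = t
          · subst h'; rw [if_pos rfl]; exact hEfc s f
          · rw [if_neg h']; exact hAc (ι f) s)
      rw [Finset.set_biInter_insert, Finset.prod_insert hnot] at h
      simp only [eq_self_iff_true, if_true] at h
      have e1 : (⋂ s ∈ Finset.Iio t,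
            (if s = t then {ω | W t f ω = 1} else Aset ι (W s) (ι f)))
          = ⋂ s ∈ Finset.Iio t, Aset ι (W s) (ι f) := by
        refine Set.iInter_congr fun s => Set.iInter_congr fun hs => ?_
        exact if_neg (Finset.mem_Iio.mp hs).ne
      have e2 : (∏ s ∈ Finset.Iio t,
            ℙ (if s = t then {ω | W t f ω = 1} else Aset ι (W s) (ι f)))
          = ∏ s ∈ Finset.Iio t, ℙ (Aset ι (W s) (ι f)) :=
        Finset.prod_congr rfl fun s hs => by rw [if_neg (Finset.mem_Iio.mp hs).ne]
      rw [e1, e2] at h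
      exact h
    have heq : (∫ ω, χ f t ω) = ∫ ω, Set.indicator
        ({ω | W t f ω = 1} ∩ ⋂ s ∈ Finset.Iio t, Aset ι (W s) (ι f)) (fun _ => (1:ℝ)) ω := by
      rw [← hrep]
    refine ⟨?_, hint⟩
    rw [heq, integral_indicator_const (1:ℝ) (hmE.inter (hCm (ι f) t)), smul_eq_mul,
      mul_one, measureReal_def, hprod, ENNReal.toReal_mul, hCprod (ι f) t, hmarg t f,
      ENNReal.toReal_ofReal (hqnn t f), div_mul_cancel₀ _ (hβne (ι f) t)]
  refine ⟨part1, fun f t => (part2 f t).1, ?_⟩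
  intro w hw
  rw [integral_finset_sum _ (fun t _ => integrable_finset_sum _
    (fun f _ => ((part2 f t).2).const_mul (w f t)))]
  have h1 : ∀ t : Fin T, (∫ ω, ∑ f, w f t * χ f t ω)
      = ∑ f, w f t * (γ * x f t * p f t) := by
    intro t
    rw [integral_finset_sum _ (fun f _ => ((part2 f t).2).const_mul (w f t))]
    refine Finset.sum_congr rfl fun f _ => ?_
    rw [integral_const_mul, (part2 f t).1]
  rw [Finset.sum_congr rfl (fun t _ => h1 t), Finset.mul_sum]
  refine Finset.sum_congr rfl fun t _ => ?_
  rw [Finset.mul_sum]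
  exact Finset.sum_congr rfl fun f _ => by ring
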